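/- Degeneracy for continuous-time walks on non-Abelian Cayley graphs: let G be a finite non-Abelian group and let U be a unitary operator on the space (G → ℂ) that commutes with λ(g) for every g ∈ G, where λ is the left regular representation. Then U has an eigenvalue μ whose eigenspace has dimension at least 2 (U is degenerate). -/

import Mathlib

open scoped ComplexInnerProductSpace

/-- The left regular representation of `G` on `G → ℂ` (modelled as
`EuclideanSpace ℂ G`), given by `(λ(g) f)(x) = f (g⁻¹ x)`. -/
def leftRegRep (G : Type*) [Group G] (g : G) :
    EuclideanSpace ℂ G →ₗ[ℂ] EuclideanSpace ℂ G where
  toFun v := WithLp.toLp 2 (fun x => v (g⁻¹ * x))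
  map_add' _ _ := rfl
  map_smul' _ _ := rfl

lemma leftRegRep_apply {G : Type*} [Group G] (g : G) (v : EuclideanSpace ℂ G) (x : G) :
    leftRegRep G g v x = v (g⁻¹ * x) := rfl

lemma leftRegRep_mul {G : Type*} [Group G] (a b : G) :
    leftRegRep G a * leftRegRep G b = leftRegRep G (a * b) := by
  ext v x
  simp only [Module.End.mul_apply, leftRegRep_apply]
  rw [mul_inv_rev, mul_assoc]

lemma leftRegRep_injective {G : Type*} [Group G] {a b : G}
    (h : leftRegRep G a = leftRegRep G b) : a = b := by
  classical
  set δ : EuclideanSpace ℂ G := WithLp.toLp 2 (fun x : G => if x = 1 then (1:ℂ) else 0) with hδ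
  have h1 : leftRegRep G a δ a = leftRegRep G b δ a := by rw [h]
  simp only [leftRegRep_apply, hδ, PiLp.toLp_apply, inv_mul_cancel, if_pos rfl] at h1
  by_contra hab
  have hne : b⁻¹ * a ≠ 1 := by
    intro hc
    exact hab (by rw [← mul_one b, ← hc, ← mul_assoc, mul_inv_cancel, one_mul])
  rw [if_neg hne] at h1
  exact one_ne_zero h1

/-- Degeneracy for continuous-time walks on non-Abelian Cayley graphs: if `G` is a
finite non-Abelian group and `U` is a unitary on `G → ℂ` commuting with the left
regular representation `λ(g)` for every `g`, then `U` has an eigenvalue whose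
eigenspace has dimension at least `2`. -/
theorem nonabelian_cayley_continuous_walk_degenerate
    {G : Type*} [Group G] [Fintype G] (hG : ∃ a b : G, a * b ≠ b * a)
    (U : EuclideanSpace ℂ G →ₗ[ℂ] EuclideanSpace ℂ G)
    (hU : U ∈ unitary (EuclideanSpace ℂ G →ₗ[ℂ] EuclideanSpace ℂ G))
    (hcomm : ∀ g : G, U * leftRegRep G g = leftRegRep G g * U) :
    ∃ μ : ℂ, 2 ≤ Module.finrank ℂ (Module.End.eigenspace U μ) := by
  classical
  by_contra hdeg
  push_neg at hdeg
  have hdim : ∀ μ : ℂ, Module.finrank ℂ (Module.End.eigenspace U μ) ≤ 1 := by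
    intro μ; have := hdeg μ; omega
  -- `U` preserves the inner product
  have hUU : LinearMap.adjoint U * U = 1 := by
    rw [← LinearMap.star_eq_adjoint]; exact hU.1
  have hinner : ∀ x y : EuclideanSpace ℂ G, ⟪U x, U y⟫ = ⟪x, y⟫ := by
    intro x y
    have h1 := LinearMap.adjoint_inner_left U y (U x)
    have h2 : LinearMap.adjoint U (U x) = x := by
      have h3 := congrArg (fun f => f x) hUU
      simpa [Module.End.mul_apply] using h3
    rw [h2] at h1
    exact h1.symm
  -- generalized eigenvectors of a unitary are genuine eigenvectors
  have hstep : ∀ (μ : ℂ) (w : EuclideanSpace ℂ G),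
      (U - μ • 1) ((U - μ • 1) w) = 0 → (U - μ • 1) w = 0 := by
    intro μ w hw
    set u := (U - μ • 1) w with hu_def
    by_cases hu : u = 0
    · exact hu
    exfalso
    have hUu : U u = μ • u := by
      have h4 : U u - μ • u = 0 := by
        simpa [LinearMap.sub_apply, LinearMap.smul_apply, Module.End.one_apply] using hw
      exact sub_eq_zero.mp h4
    have hne : ⟪u, u⟫ ≠ 0 := inner_self_ne_zero.mpr hu
    -- |μ| = 1
    have hμ : (starRingEnd ℂ) μ * μ = 1 := by
      have h5 := hinner u u
      rw [hUu, inner_smul_left, inner_smul_right] at h5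
      have h6 : ((starRingEnd ℂ) μ * μ - 1) * ⟪u, u⟫ = 0 := by ring_nf; linear_combination h5
      rcases mul_eq_zero.mp h6 with h7 | h7
      · linear_combination h7
      · exact absurd h7 hne
    -- the key normality computation
    have hw2 : u = U w - μ • w := by
      rw [hu_def]
      simp [LinearMap.sub_apply, LinearMap.smul_apply, Module.End.one_apply]
    have e0 : (starRingEnd ℂ) μ * ⟪u, U w⟫ = ⟪u, w⟫ := by
      have h8 := hinner u w
      rw [hUu, inner_smul_left] at h8
      exact h8
    have e1 : ⟪u, U w⟫ = μ * ⟪u, w⟫ := by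
      linear_combination μ * e0 - ⟪u, U w⟫ * hμ
    have e2 : ⟪u, u⟫ = 0 := by
      conv_lhs => rw [show ⟪u, u⟫ = ⟪u, U w - μ • w⟫ by rw [← hw2]]
      rw [inner_sub_right, inner_smul_right, e1, sub_self]
    exact hne e2
  -- hence all generalized eigenspaces are eigenspaces, so eigenspaces span
  have hmax : ∀ μ : ℂ, Module.End.maxGenEigenspace U μ ≤ Module.End.eigenspace U μ := by
    intro μ v hv
    rw [Module.End.mem_maxGenEigenspace] at hv
    obtain ⟨k, hk⟩ := hv
    have key : ∀ (k : ℕ) (w : EuclideanSpace ℂ G),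
        ((U - μ • 1) ^ k) w = 0 → (U - μ • 1) w = 0 := by
      intro k
      induction k with
      | zero =>
        intro w hw
        simp only [pow_zero, Module.End.one_apply] at hw
        rw [hw, map_zero]
      | succ n ih =>
        intro w hw
        rw [pow_succ, Module.End.mul_apply] at hw
        exact hstep μ w (ih _ hw)
    have h9 := key k v hk
    rw [Module.End.mem_eigenspace_iff]
    have h10 : U v - μ • v = 0 := by
      simpa [LinearMap.sub_apply, LinearMap.smul_apply, Module.End.one_apply] using h9
    exact sub_eq_zero.mp h10
  have hsup : ⨆ μ : ℂ, Module.End.eigenspace U μ = ⊤ := by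
    refine le_antisymm le_top ?_
    rw [← Module.End.iSup_maxGenEigenspace_eq_top U]
    exact iSup_mono hmax
  -- all λ(g) become scalars on eigenlines, hence commute
  have hcommL : ∀ a b : G,
      leftRegRep G a * leftRegRep G b = leftRegRep G b * leftRegRep G a := by
    intro a b
    have hloc : ∀ μ : ℂ, Module.End.eigenspace U μ ≤
        LinearMap.eqLocus (leftRegRep G a * leftRegRep G b)
          (leftRegRep G b * leftRegRep G a) := by
      intro μ v hv
      by_cases h0 : v = 0
      · simp [LinearMap.mem_eqLocus, h0]
      have hinv : ∀ g : G, leftRegRep G g v ∈ Module.End.eigenspace U μ := by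
        intro g
        rw [Module.End.mem_eigenspace_iff] at hv ⊢
        have h11 := congrArg (fun f => f v) (hcomm g)
        simp only [Module.End.mul_apply] at h11
        rw [h11, hv, map_smul]
      have hspan : Submodule.span ℂ {v} = Module.End.eigenspace U μ := by
        apply Submodule.eq_of_le_of_finrank_le
          (Submodule.span_le.mpr (by simpa using hv))
        rw [finrank_span_singleton h0]
        exact hdim μ
      obtain ⟨ca, hca⟩ := Submodule.mem_span_singleton.mp (hspan ▸ hinv a)
      obtain ⟨cb, hcb⟩ := Submodule.mem_span_singleton.mp (hspan ▸ hinv b)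
      show (leftRegRep G a * leftRegRep G b) v = (leftRegRep G b * leftRegRep G a) v
      simp only [Module.End.mul_apply, ← hca, ← hcb, map_smul]
      rw [smul_comm]
    have htop : (⊤ : Submodule ℂ (EuclideanSpace ℂ G)) ≤
        LinearMap.eqLocus (leftRegRep G a * leftRegRep G b)
          (leftRegRep G b * leftRegRep G a) := by
      rw [← hsup]; exact iSup_le hloc
    exact LinearMap.ext fun v => htop (Submodule.mem_top)
  obtain ⟨a, b, hab⟩ := hG
  apply hab
  apply leftRegRep_injective (a := a * b) (b := b * a)
  rw [← leftRegRep_mul, ← leftRegRep_mul, hcommL a b]
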